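/- Characterization of computational independence via tensor product: jointly distributed efficiently samplable ensembles {Rₙ}, {Qₙ} are computationally independent (i.e., indistinguishable from some pair of statistically independent efficiently samplable ensembles ({R′ₙ},{Q′ₙ})) if and only if the joint ensemble ({Rₙ},{Qₙ}) is indistinguishable from the independent product {Rₙ} ⊗ {Qₙ} of its marginals. (Abstract version: over any class of distinguishers closed under projecting to one coordinate, resampling a coordinate independently, and under transitivity of indistinguishability, the two conditions are equivalent.) -/

import Mathlib

def Negligible (ν : ℕ → ℝ) : Prop :=
  ∀ k : ℕ, ∃ N : ℕ, ∀ n ≥ N, ν n ≤ 1 / (n : ℝ) ^ k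

def Indist {X : ℕ → Type} (𝔄 : Set (∀ n, X n → PMF Bool))
    (D E : ∀ n, PMF (X n)) : Prop :=
  ∀ A ∈ 𝔄, Negligible fun n =>
    |(((D n).bind (A n)) true).toReal - (((E n).bind (A n)) true).toReal|

/-- The independent product of the two marginals of a joint ensemble. -/
noncomputable def prodMarg {X Y : ℕ → Type} (J : ∀ n, PMF (X n × Y n)) :
    ∀ n, PMF (X n × Y n) :=
  fun n => ((J n).map Prod.fst).bind fun x => ((J n).map Prod.snd).map fun y => (x, y)

lemma negligible_of_le {μ ν : ℕ → ℝ} (h : ∀ n, μ n ≤ ν n) (hν : Negligible ν) :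
    Negligible μ := fun k => by
  obtain ⟨N, hN⟩ := hν k
  exact ⟨N, fun n hn => (h n).trans (hN n hn)⟩

lemma negligible_add {μ ν : ℕ → ℝ} (hμ : Negligible μ) (hν : Negligible ν) :
    Negligible (fun n => μ n + ν n) := by
  intro k
  obtain ⟨N1, h1⟩ := hμ (k + 1)
  obtain ⟨N2, h2⟩ := hν (k + 1)
  refine ⟨max (max N1 N2) 2, fun n hn => ?_⟩
  have hn1 : n ≥ N1 := le_trans (le_trans (le_max_left _ _) (le_max_left _ _)) hn
  have hn2 : n ≥ N2 := le_trans (le_trans (le_max_right _ _) (le_max_left _ _)) hn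
  have hn3 : (2 : ℝ) ≤ n := by exact_mod_cast le_trans (le_max_right _ _) hn
  have hnpos : (0 : ℝ) < n := lt_of_lt_of_le (by norm_num) hn3
  have hpow : (0 : ℝ) < (n : ℝ) ^ k := pow_pos hnpos k
  have hpow1 : (0 : ℝ) < (n : ℝ) ^ (k + 1) := pow_pos hnpos (k + 1)
  calc μ n + ν n ≤ 1 / (n : ℝ) ^ (k + 1) + 1 / (n : ℝ) ^ (k + 1) :=
        add_le_add (h1 n hn1) (h2 n hn2)
    _ = 2 / (n : ℝ) ^ (k + 1) := by ring
    _ ≤ 1 / (n : ℝ) ^ k := by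
        rw [div_le_div_iff₀ hpow1 hpow, pow_succ]
        nlinarith

lemma prod_bind {α β γ : Type} (Sp : PMF α) (Qp : PMF β) (A : α × β → PMF γ) :
    ((Sp.bind fun x => Qp.map fun y => (x, y)).bind A)
      = Sp.bind fun x => Qp.bind fun y => A (x, y) := by
  rw [PMF.bind_bind]
  congr 1
  funext x
  rw [PMF.bind_map]
  rfl

lemma fst_bind {α β γ : Type} (J : PMF (α × β)) (B : α → PMF γ) :
    (J.map Prod.fst).bind B = J.bind fun p => B p.1 := by
  rw [PMF.bind_map]; rfl

lemma snd_bind {α β γ : Type} (J : PMF (α × β)) (B : β → PMF γ) :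
    (J.map Prod.snd).bind B = J.bind fun p => B p.2 := by
  rw [PMF.bind_map]; rfl

lemma fst_prod {α β : Type} (Sp : PMF α) (Qp : PMF β) :
    (Sp.bind fun x => Qp.map fun y => (x, y)).map Prod.fst = Sp := by
  rw [PMF.map_bind]
  have h : ∀ x : α, ((Qp.map fun y => (x, y)).map Prod.fst) = pure x := fun x => by
    rw [PMF.map_comp]
    have hc : (Prod.fst ∘ fun y : β => (x, y)) = Function.const β x := rfl
    rw [hc]; exact PMF.map_const Qp x
  simp only [h]
  exact Sp.bind_pure

lemma snd_prod {α β : Type} (Sp : PMF α) (Qp : PMF β) :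
    (Sp.bind fun x => Qp.map fun y => (x, y)).map Prod.snd = Qp := by
  rw [PMF.map_bind]
  have h : ∀ x : α, ((Qp.map fun y => (x, y)).map Prod.snd) = Qp := fun x => by
    rw [PMF.map_comp]; exact PMF.map_id Qp
  simp only [h, PMF.bind_const]

lemma prodMarg_idem {X Y : ℕ → Type} (J : ∀ n, PMF (X n × Y n)) (n : ℕ) :
    prodMarg J n = prodMarg (prodMarg J) n := by
  simp only [prodMarg]
  rw [fst_prod, snd_prod]

lemma abs_tri3 (x y z : ℝ) : |x - y - z| ≤ |x| + |y| + |z| := by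
  have := (abs_add_le (x + -y) (-z)).trans (add_le_add_left (abs_add_le x (-y)) _)
  simpa [sub_eq_add_neg, abs_neg] using this

theorem computational_independence_iff_tensor {X Y : ℕ → Type}
    (𝔄 : Set (∀ n, X n × Y n → PMF Bool))
    (𝔄X : Set (∀ n, X n → PMF Bool)) (𝔄Y : Set (∀ n, Y n → PMF Bool))
    (c1 : ∀ A ∈ 𝔄X, (fun n (p : X n × Y n) => A n p.1) ∈ 𝔄)
    (c2 : ∀ A ∈ 𝔄Y, (fun n (p : X n × Y n) => A n p.2) ∈ 𝔄)
    (c3 : ∀ A ∈ 𝔄, ∀ T : (∀ n, PMF (Y n)),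
      (fun n (x : X n) => (T n).bind fun y => A n (x, y)) ∈ 𝔄X)
    (c4 : ∀ A ∈ 𝔄, ∀ S : (∀ n, PMF (X n)),
      (fun n (y : Y n) => (S n).bind fun x => A n (x, y)) ∈ 𝔄Y)
    (J : ∀ n, PMF (X n × Y n)) :
    (∃ J' : ∀ n, PMF (X n × Y n),
        (∀ n, J' n = prodMarg J' n) ∧ Indist 𝔄 J J')
      ↔ Indist 𝔄 J (prodMarg J) := by
  constructor
  · rintro ⟨J', hJ'eq, hJJ'⟩ A hA
    have hBX := c3 A hA (fun n => (J' n).map Prod.snd)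
    have hB'Y := c4 A hA (fun n => (J n).map Prod.fst)
    have hC1 := c1 _ hBX
    have hC2 := c2 _ hB'Y
    have ν0 := hJJ' A hA
    have ν1 := hJJ' _ hC1
    have ν2 := hJJ' _ hC2
    refine negligible_of_le (fun n => ?_) (negligible_add (negligible_add ν0 ν1) ν2)
    simp only
    -- abbreviations for the six real values
    set a := (((J n).bind (A n)) true).toReal with ha
    set b := (((J' n).bind (A n)) true).toReal with hbdef
    set d := (((prodMarg J n).bind (A n)) true).toReal with hd
    set t1 := (((J n).bind fun p =>
        ((J' n).map Prod.snd).bind fun y => A n (p.1, y)) true).toReal with ht1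
    set t1' := (((J' n).bind fun p =>
        ((J' n).map Prod.snd).bind fun y => A n (p.1, y)) true).toReal with ht1'
    set t2 := (((J n).bind fun p =>
        ((J n).map Prod.fst).bind fun x => A n (x, p.2)) true).toReal with ht2
    set t2' := (((J' n).bind fun p =>
        ((J n).map Prod.fst).bind fun x => A n (x, p.2)) true).toReal with ht2'
    -- b = t1'
    have eb : (J' n).bind (A n)
        = (J' n).bind fun p => ((J' n).map Prod.snd).bind fun y => A n (p.1, y) := by
      conv_lhs => rw [hJ'eq n]
      exact (prod_bind _ _ _).trans (fst_bind _ _)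
    -- t1 = t2'
    have et : ((J n).bind fun p => ((J' n).map Prod.snd).bind fun y => A n (p.1, y))
        = (J' n).bind fun p => ((J n).map Prod.fst).bind fun x => A n (x, p.2) := by
      refine ((fst_bind (J n)
        (fun x => ((J' n).map Prod.snd).bind fun y => A n (x, y))).symm).trans ?_
      refine (PMF.bind_comm _ _ _).trans ?_
      exact snd_bind _ _
    -- d = t2
    have ed : (prodMarg J n).bind (A n)
        = (J n).bind fun p => ((J n).map Prod.fst).bind fun x => A n (x, p.2) := by
      refine (prod_bind ((J n).map Prod.fst) ((J n).map Prod.snd) (A n)).trans ?_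
      refine (PMF.bind_comm _ _ _).trans ?_
      exact snd_bind _ _
    have hb : b = t1' := by rw [hbdef, ht1', eb]
    have h12 : t1 = t2' := by rw [ht1, ht2', et]
    have hdt : d = t2 := by rw [hd, ht2, ed]
    have key : a - d = (a - b) - (t1 - t1') - (t2 - t2') := by
      rw [hb, h12, hdt]; ring
    calc |a - d| = |(a - b) - (t1 - t1') - (t2 - t2')| := by rw [key]
      _ ≤ |a - b| + |t1 - t1'| + |t2 - t2'| := abs_tri3 _ _ _
  · intro h
    exact ⟨prodMarg J, fun n => prodMarg_idem J n, h⟩
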